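/- Let n ≥ 2 and let e_1, …, e_n be an orthonormal basis of V with T = ‖T‖ e_1, S e_1 = λ e_1, and S e_a = μ e_a for all a ≥ 2. Then the scalar curvature ρ = Σ_{i=1}^n Σ_{j=1}^n G(e_j, e_i, e_i, e_j) equals (n−1)(n−2)(μ² + ε) + 2(n−1)(λ μ + ε c²). (This is the scalar curvature formula, derived from the Gauss equation, for a hypersurface of S^n × ℝ or H^n × ℝ whose shape operator has eigenvalue λ on the principal direction T and eigenvalue μ of multiplicity n−1; it is the key computation in the proof of Corollary 13 on conformally flat hypersurfaces with constant scalar curvature.) -/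
import Mathlib


open scoped InnerProductSpace

/-- The Gauss quadrilinear form of a hypersurface of `Q^n(ε) × ℝ` with shape operator `S`
and tangential vertical projection `T`: by the Gauss equation it equals `⟨R(X,Y)Z,W⟩`. -/
noncomputable def gaussForm {V : Type*} [NormedAddCommGroup V] [InnerProductSpace ℝ V]
    (S : V →ₗ[ℝ] V) (T : V) (ε : ℝ) (X Y Z W : V) : ℝ :=
  ε * (⟪X, W⟫_ℝ * ⟪Y, Z⟫_ℝ - ⟪X, Z⟫_ℝ * ⟪Y, W⟫_ℝ
      + ⟪X, T⟫_ℝ * ⟪Z, T⟫_ℝ * ⟪Y, W⟫_ℝ + ⟪Y, T⟫_ℝ * ⟪W, T⟫_ℝ * ⟪X, Z⟫_ℝ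
      - ⟪Y, T⟫_ℝ * ⟪Z, T⟫_ℝ * ⟪X, W⟫_ℝ - ⟪X, T⟫_ℝ * ⟪W, T⟫_ℝ * ⟪Y, Z⟫_ℝ)
    + ⟪S X, W⟫_ℝ * ⟪S Y, Z⟫_ℝ - ⟪S X, Z⟫_ℝ * ⟪S Y, W⟫_ℝ

/-- Scalar curvature formula `ρ = (n−1)(n−2)(μ²+ε) + 2(n−1)(λμ + ε c²)` when the shape
operator has eigenvalue `λ` on the principal direction `T = ‖T‖ e_1` and eigenvalue `μ` of
multiplicity `n−1`. -/
theorem scalar_curvature_formula {V : Type*} [NormedAddCommGroup V]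
    [InnerProductSpace ℝ V] [FiniteDimensional ℝ V] {n : ℕ} (hn : 2 ≤ n)
    (S : V →ₗ[ℝ] V) (hS : S.IsSymmetric) (T : V) (ε c : ℝ)
    (hε : ε = 1 ∨ ε = -1) (hc : ‖T‖ ^ 2 + c ^ 2 = 1)
    (e : OrthonormalBasis (Fin n) ℝ V) (lam μ : ℝ)
    (hT : T = ‖T‖ • e ⟨0, by omega⟩)
    (hS1 : S (e ⟨0, by omega⟩) = lam • e ⟨0, by omega⟩)
    (hSa : ∀ a : Fin n, a ≠ ⟨0, by omega⟩ → S (e a) = μ • e a) :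
    ∑ i : Fin n, ∑ j : Fin n, gaussForm S T ε (e j) (e i) (e i) (e j) =
      ((n : ℝ) - 1) * ((n : ℝ) - 2) * (μ ^ 2 + ε)
        + 2 * ((n : ℝ) - 1) * (lam * μ + ε * c ^ 2) := by
  have hn0 : 0 < n := by omega
  set z : Fin n := ⟨0, hn0⟩ with hzdef
  have hinner : ∀ a b : Fin n, ⟪e a, e b⟫_ℝ = if a = b then 1 else 0 :=
    orthonormal_iff_ite.mp e.orthonormal
  have hSe : ∀ k : Fin n, S (e k) = (if k = z then lam else μ) • e k := by
    intro k
    by_cases h : k = z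
    · subst h; simpa using hS1
    · simpa [h] using hSa k h
  have htk : ∀ k : Fin n, ⟪e k, T⟫_ℝ = if k = z then ‖T‖ else 0 := by
    intro k
    conv_lhs => rw [hT]
    rw [real_inner_smul_right, hinner]
    by_cases h : k = z <;> simp [h]
  -- abbreviations
  set s : Fin n → ℝ := fun k => if k = z then lam else μ with hsdef
  set t : Fin n → ℝ := fun k => if k = z then ‖T‖ ^ 2 else 0 with htdef
  have key : ∀ i j : Fin n, gaussForm S T ε (e j) (e i) (e i) (e j) =
      (ε + s i * s j - ε * (t i + t j)) - (if i = j then ε + s i * s i - ε * (t i + t i) else 0) := by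
    intro i j
    unfold gaussForm
    rw [hSe i, hSe j]
    simp only [real_inner_smul_left, hinner, htk, hsdef, htdef]
    by_cases hij : i = j
    · subst hij
      by_cases hi : i = z <;> simp [hi] <;> ring
    · have hij' : ¬ j = i := fun hh => hij hh.symm
      by_cases hi : i = z <;> by_cases hj : j = z
      · exact absurd (hi.trans hj.symm) hij
      · have hj' : ¬ z = j := fun hh => hj hh.symm
        simp [hij, hij', hi, hj, hj']; try ring
      · have hi' : ¬ z = i := fun hh => hi hh.symm
        simp [hij, hij', hi, hj, hi']; try ring
      · simp [hij, hij', hi, hj]; try ring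
  simp only [key]
  rw [Finset.sum_comm]  -- maybe not needed
  have hsums : ∑ k : Fin n, s k = lam + ((n : ℝ) - 1) * μ := by
    have : ∑ k : Fin n, s k = ∑ k : Fin n, ((if k = z then lam - μ else 0) + μ) := by
      apply Finset.sum_congr rfl; intro k _
      by_cases h : k = z <;> simp [hsdef, h]
    rw [this, Finset.sum_add_distrib, Finset.sum_ite_eq' Finset.univ z]
    simp [Finset.card_univ]
    ring
  have hsums2 : ∑ k : Fin n, s k * s k = lam * lam + ((n : ℝ) - 1) * (μ * μ) := by
    have : ∑ k : Fin n, s k * s k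
        = ∑ k : Fin n, ((if k = z then lam * lam - μ * μ else 0) + μ * μ) := by
      apply Finset.sum_congr rfl; intro k _
      by_cases h : k = z <;> simp [hsdef, h]
    rw [this, Finset.sum_add_distrib, Finset.sum_ite_eq' Finset.univ z]
    simp [Finset.card_univ]
    ring
  have htsum : ∑ k : Fin n, t k = ‖T‖ ^ 2 := by
    rw [htdef]
    rw [Finset.sum_ite_eq' Finset.univ z]
    simp
  have hT2 : ‖T‖ ^ 2 = 1 - c ^ 2 := by linarith
  -- expand
  simp only [Finset.sum_sub_distrib, Finset.sum_add_distrib, Finset.sum_ite_eq' Finset.univ,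
    Finset.mem_univ, if_true, Finset.sum_const, Finset.card_univ, Fintype.card_fin,
    nsmul_eq_mul, ← Finset.sum_mul, ← Finset.mul_sum, hsums, hsums2, htsum, hT2]
  ring
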